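/- For every finite set N of agents, every finite set M of items, and every family of monotone valuations v_i : 2^M → ℝ≥0 (i ∈ N), there exists an allocation (X_i)_{i∈N} of all of M (pairwise disjoint bundles with ⋃_{i∈N} X_i = M) that is EF1: for every pair of agents i, j, either v_i(X_i) ≥ v_i(X_j) or there exists an item k ∈ X_j with v_i(X_i) ≥ v_i(X_j ∖ {k}). -/

import Mathlib

/-!  Common setup for fair division: agents `N`, items `I`, monotone valuations
`v : N → Finset I → ℝ`, allocations `(𝒳, μ)` given by a bundle family `X : N → Finset I`
and a bijection `σ : Equiv.Perm N` on indices (agent `i` receives bundle `X (σ i)`),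
the assign-envy graph, and its auxiliary directed graph. -/

variable {N I : Type*}

/-- Weight of a walk in a directed graph, given by its list of vertices. -/
def walkWeight {V : Type*} (W : V → V → ℝ) (l : List V) : ℝ :=
  ((l.zip l.tail).map fun p => W p.1 p.2).sum

/-- A (simple) directed cycle, given by the list of its vertices (the closing edge
from the last vertex back to the first is implicit). -/
def IsDiCycle {V : Type*} (adj : V → V → Prop) (l : List V) : Prop :=
  l ≠ [] ∧ l.Nodup ∧ (l ++ l.take 1).Chain' adj

/-- Total weight of a directed cycle (including the closing edge). -/
def cycleWeight {V : Type*} (W : V → V → ℝ) (l : List V) : ℝ :=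
  walkWeight W (l ++ l.take 1)

/-- Adjacency (on indices) of the assign-envy graph `G(𝒳, μ)` of the allocation `(X, σ)`:
agent `i` is joined to its own bundle `X (σ i)` and to every bundle it envies. -/
def aeAdj (v : N → Finset I → ℝ) (X : N → Finset I) (σ : Equiv.Perm N) (i j : N) : Prop :=
  j = σ i ∨ v i (X (σ i)) < v i (X j)

/-- Edge weights of the assign-envy graph: `w(i, X_j) = −v_i(X_j)`. -/
def aeW (v : N → Finset I → ℝ) (X : N → Finset I) (i j : N) : ℝ := - v i (X j)

/-- Auxiliary directed graph of a bipartite graph on `N ⊕ N` (agents on the left, bundle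
indices on the right) with respect to the perfect matching given by a permutation `τ`:
non-matching edges go left-to-right, matching edges are reversed. -/
def aeAux (adj : N → N → Prop) (τ : Equiv.Perm N) : N ⊕ N → N ⊕ N → Prop
  | Sum.inl i, Sum.inr j => adj i j ∧ j ≠ τ i
  | Sum.inr j, Sum.inl i => j = τ i
  | _, _ => False

/-- Auxiliary weights on the auxiliary directed graph: forward edges keep their weight,
reversed matching edges get the negated weight. -/
def aeAuxW (W : N → N → ℝ) : N ⊕ N → N ⊕ N → ℝ
  | Sum.inl i, Sum.inr j => W i j
  | Sum.inr j, Sum.inl i => - W i j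
  | _, _ => 0

/-- EF1 (envy-freeness up to one item) for a family of assigned bundles `Y : N → Finset I`. -/
def EF1 [DecidableEq I] (v : N → Finset I → ℝ) (Y : N → Finset I) : Prop :=
  ∀ i j : N, v i (Y i) ≥ v i (Y j) ∨ ∃ k ∈ Y j, v i (Y i) ≥ v i ((Y j).erase k)

/-- For every finite set of agents, finite set of items, and monotone
nonnegative valuations, there exists an EF1 allocation of all items (pairwise disjoint
bundles whose union is the whole item set). -/
lemma exists_good_perm [Fintype N] [Nonempty N] (v : N → Finset I → ℝ) (Y : N → Finset I) :
    ∃ σ : Equiv.Perm N, (∀ i, v i (Y i) ≤ v i (Y (σ i))) ∧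
      ∃ i0 : N, ∀ i, v i (Y (σ i0)) ≤ v i (Y (σ i)) := by
  classical
  set P : Finset (Equiv.Perm N) :=
    Finset.univ.filter (fun σ => ∀ i, v i (Y i) ≤ v i (Y (σ i))) with hP
  have hne : P.Nonempty := ⟨1, by simp [hP]⟩
  obtain ⟨σ, hσP, hmax⟩ := P.exists_max_image (fun σ => ∑ i, v i (Y (σ i))) hne
  have hσ : ∀ i, v i (Y i) ≤ v i (Y (σ i)) := by
    simpa [hP] using hσP
  refine ⟨σ, hσ, ?_⟩
  by_contra hno
  push_neg at hno
  set Z : N → Finset I := fun i => Y (σ i) with hZ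
  choose f hf using hno
  -- hf : ∀ j, v (f j) (Z (f j)) < v (f j) (Z j)
  obtain ⟨k, l, hkl, he⟩ :=
    Finite.exists_ne_map_eq_of_infinite (fun t : ℕ => f^[t] (Classical.arbitrary N))
  wlog hlt : k < l generalizing k l
  · exact this l k hkl.symm he.symm (by omega)
  set j0 := Classical.arbitrary N
  set p : N := f^[k] j0 with hp
  set n : ℕ := l - k with hn
  have hn0 : 0 < n := by omega
  have hper : f^[n] p = p := by
    have : f^[n + k] j0 = f^[n] (f^[k] j0) := Function.iterate_add_apply f n k j0
    have hnk : n + k = l := by omega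
    simp only [hnk] at this
    simpa [hp] using (this.symm.trans he.symm)
  set O : Set N := Set.range (fun t : ℕ => f^[t] p) with hO
  have hpO : p ∈ O := ⟨0, rfl⟩
  have hmaps : ∀ x ∈ O, f x ∈ O := by
    rintro x ⟨t, rfl⟩
    exact ⟨t + 1, Function.iterate_succ_apply' f t p⟩
  have hsurj : ∀ y ∈ O, ∃ x ∈ O, f x = y := by
    rintro y ⟨t, rfl⟩
    refine ⟨f^[t + n - 1] p, ⟨t + n - 1, rfl⟩, ?_⟩
    have h1 : f (f^[t + n - 1] p) = f^[t + n] p := by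
      rw [← Function.iterate_succ_apply' f (t + n - 1) p]
      congr 1
      omega
    rw [h1, Function.iterate_add_apply, hper]
  have hOfin : O.Finite := Set.toFinite O
  have hinjO : Set.InjOn f O := by
    have hbij := (Set.Finite.surjOn_iff_bijOn_of_mapsTo hOfin hmaps).mp
      (fun y hy => by obtain ⟨x, hx, hfx⟩ := hsurj y hy; exact ⟨x, hx, hfx⟩)
    exact hbij.injOn
  set g : N → N := fun i => if i ∈ O then f i else i with hg
  have hginj : Function.Injective g := by
    intro x y hxy
    by_cases hx : x ∈ O <;> by_cases hy : y ∈ O <;> simp only [hg, hx, hy, if_pos, if_neg,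
      if_true, if_false] at hxy
    · exact hinjO hx hy hxy
    · exact absurd (hxy ▸ hmaps x hx) hy
    · exact absurd (hxy.symm ▸ hmaps y hy) hx
    · exact hxy
  have hgbij : Function.Bijective g := Finite.injective_iff_bijective.mp hginj
  set e := Equiv.ofBijective g hgbij with he'
  set π := e.symm with hπ
  have hge : ∀ x, (if π x ∈ O then f (π x) else π x) = x := by
    intro x
    have h : g (π x) = x := e.apply_symm_apply x
    rw [hg] at h
    simpa using h
  have hkey : ∀ i, v i (Z i) ≤ v i (Z (π i)) := by
    intro i
    by_cases hi : i ∈ O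
    · have hπO : π i ∈ O := by
        by_contra h
        have h2 := hge i
        rw [if_neg h] at h2
        rw [h2] at h
        exact h hi
      have hfp : f (π i) = i := by
        have h2 := hge i
        rwa [if_pos hπO] at h2
      have := hf (π i)
      rw [hfp] at this
      exact this.le
    · have hπO : π i ∉ O := by
        intro h
        have h2 := hge i
        rw [if_pos h] at h2
        exact hi (h2 ▸ hmaps _ h)
      have h2 : π i = i := by
        have h2 := hge i
        rwa [if_neg hπO] at h2
      rw [h2]
  have hstrict : v p (Z p) < v p (Z (π p)) := by
    have hπO : π p ∈ O := by
      by_contra h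
      have h2 := hge p
      rw [if_neg h] at h2
      rw [h2] at h
      exact h hpO
    have hfp : f (π p) = p := by
      have h2 := hge p
      rwa [if_pos hπO] at h2
    have := hf (π p)
    rwa [hfp] at this
  set σ' : Equiv.Perm N := π.trans σ with hσ'
  have hσ'P : σ' ∈ P := by
    simp only [hP, Finset.mem_filter, Finset.mem_univ, true_and]
    intro i
    exact (hσ i).trans (hkey i)
  have hsum : ∑ i, v i (Y (σ i)) < ∑ i, v i (Y (σ' i)) := by
    apply Finset.sum_lt_sum (fun i _ => hkey i) ⟨p, Finset.mem_univ p, hstrict⟩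
  exact absurd (hmax σ' hσ'P) (not_le.mpr hsum)

theorem exists_EF1_allocation
    [Fintype N] [Fintype I] [DecidableEq I] [Nonempty N]
    (v : N → Finset I → ℝ)
    (hmono : ∀ i : N, ∀ A B : Finset I, A ⊆ B → v i A ≤ v i B)
    (hnonneg : ∀ (i : N) (A : Finset I), 0 ≤ v i A) :
    ∃ X : N → Finset I,
      (∀ i j : N, i ≠ j → Disjoint (X i) (X j)) ∧
      (∀ k : I, ∃ i : N, k ∈ X i) ∧
      EF1 v X := by
  classical
  have key : ∀ S : Finset I, ∃ X : N → Finset I,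
      (∀ i j : N, i ≠ j → Disjoint (X i) (X j)) ∧
      (∀ i : N, X i ⊆ S) ∧
      (∀ k ∈ S, ∃ i : N, k ∈ X i) ∧
      EF1 v X := by
    intro S
    induction S using Finset.induction_on with
    | empty =>
      exact ⟨fun _ => ∅, fun i j _ => by simp, fun i => by simp, fun k hk => by simp at hk,
        fun i j => Or.inl le_rfl⟩
    | @insert a S ha ih =>
      obtain ⟨X, hdisj, hsub, hcov, hEF1⟩ := ih
      obtain ⟨σ, hσ, i0, hi0⟩ := exists_good_perm v X
      set Y : N → Finset I := fun i => X (σ i) with hY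
      have hYdisj : ∀ i j : N, i ≠ j → Disjoint (Y i) (Y j) := fun i j hij =>
        hdisj (σ i) (σ j) (fun h => hij (σ.injective h))
      have hYsub : ∀ i, Y i ⊆ S := fun i => hsub (σ i)
      have haY : ∀ i, a ∉ Y i := fun i h => ha (hYsub i h)
      have hYE : EF1 v Y := by
        intro i j
        rcases hEF1 i (σ j) with h | ⟨k, hk, h⟩
        · exact Or.inl (le_trans h (hσ i))
        · exact Or.inr ⟨k, hk, le_trans h (hσ i)⟩
      set Z : N → Finset I := fun i => if i = i0 then insert a (Y i0) else Y i with hZ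
      have hZi0 : Z i0 = insert a (Y i0) := by simp [hZ]
      have hZne : ∀ i, i ≠ i0 → Z i = Y i := fun i h => by simp [hZ, h]
      have hZown : ∀ i, v i (Y i) ≤ v i (Z i) := by
        intro i
        by_cases h : i = i0
        · subst h; rw [hZi0]; exact hmono i _ _ (Finset.subset_insert a _)
        · rw [hZne i h]
      refine ⟨Z, ?_, ?_, ?_, ?_⟩
      · intro i j hij
        by_cases hi : i = i0 <;> by_cases hj : j = i0
        · exact absurd (hi.trans hj.symm) hij
        · rw [hi, hZi0, hZne j hj]
          rw [Finset.disjoint_insert_left]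
          exact ⟨haY j, hYdisj i0 j (fun h => hj h.symm)⟩
        · rw [hj, hZi0, hZne i hi]
          rw [Finset.disjoint_insert_right]
          exact ⟨haY i, hYdisj i i0 hi⟩
        · rw [hZne i hi, hZne j hj]
          exact hYdisj i j hij
      · intro i
        by_cases h : i = i0
        · rw [h, hZi0]
          exact Finset.insert_subset_insert a (hYsub i0)
        · rw [hZne i h]
          exact (hYsub i).trans (Finset.subset_insert a S)
      · intro k hk
        rcases Finset.mem_insert.mp hk with rfl | hkS
        · exact ⟨i0, by rw [hZi0]; exact Finset.mem_insert_self k _⟩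
        · obtain ⟨i, hi⟩ := hcov k hkS
          refine ⟨σ.symm i, ?_⟩
          have hYk : k ∈ Y (σ.symm i) := by
            simp only [hY, Equiv.apply_symm_apply]; exact hi
          by_cases h : σ.symm i = i0
          · rw [h] at hYk ⊢
            rw [hZi0]
            exact Finset.mem_insert_of_mem hYk
          · rwa [hZne _ h]
      · intro i j
        by_cases hj : j = i0
        · by_cases hi : i = i0
          · exact Or.inl (by rw [hi, hj])
          · refine Or.inr ⟨a, by rw [hj, hZi0]; exact Finset.mem_insert_self a _, ?_⟩
            rw [hj, hZi0, Finset.erase_insert (haY i0), hZne i hi]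
            exact hi0 i
        · rw [hZne j hj]
          rcases hYE i j with h | ⟨k, hk, h⟩
          · exact Or.inl (h.trans (hZown i))
          · exact Or.inr ⟨k, hk, h.trans (hZown i)⟩
  obtain ⟨X, h1, h2, h3, h4⟩ := key Finset.univ
  exact ⟨X, h1, fun k => h3 k (Finset.mem_univ k), h4⟩
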